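/- Let V be a finite-dimensional complex vector space with endomorphisms d and δ satisfying d ∘ d = 0 and δ ∘ δ = 0, and set □ = d∘δ + δ∘d. If d and δ are disjoint (i.e. ker d ∩ range δ = 0 and ker δ ∩ range d = 0), then V decomposes as the internal direct sum V = range d ⊕ ker □ ⊕ range δ. -/

import Mathlib

/-- Hodge-type decomposition: if `d` and `δ` are disjoint, then
`V = range d ⊕ ker □ ⊕ range δ` as an internal direct sum, where `□ = dδ + δd`. -/
theorem stmt0 (V : Type*) [AddCommGroup V] [Module ℂ V] [FiniteDimensional ℂ V]
    (d δ : V →ₗ[ℂ] V) (hd : d ∘ₗ d = 0) (hδ : δ ∘ₗ δ = 0)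
    (h1 : LinearMap.ker d ⊓ LinearMap.range δ = ⊥)
    (h2 : LinearMap.ker δ ⊓ LinearMap.range d = ⊥) :
    DirectSum.IsInternal
      ![LinearMap.range d, LinearMap.ker (d ∘ₗ δ + δ ∘ₗ d), LinearMap.range δ] := by
  set Rd := LinearMap.range d with hRd
  set Rδ := LinearMap.range δ with hRδ
  set K := LinearMap.ker (d ∘ₗ δ + δ ∘ₗ d) with hK
  have hdd : ∀ x, d (d x) = 0 := fun x => by
    have := DFunLike.congr_fun hd x; simpa using this
  have hδδ : ∀ x, δ (δ x) = 0 := fun x => by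
    have := DFunLike.congr_fun hδ x; simpa using this
  have z1 : ∀ x, d x = 0 → x ∈ Rδ → x = 0 := fun x hx hx' => by
    have : x ∈ LinearMap.ker d ⊓ LinearMap.range δ :=
      Submodule.mem_inf.mpr ⟨LinearMap.mem_ker.mpr hx, hx'⟩
    rw [h1] at this; simpa using this
  have z2 : ∀ x, δ x = 0 → x ∈ Rd → x = 0 := fun x hx hx' => by
    have : x ∈ LinearMap.ker δ ⊓ LinearMap.range d :=
      Submodule.mem_inf.mpr ⟨LinearMap.mem_ker.mpr hx, hx'⟩
    rw [h2] at this; simpa using this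
  -- kernel of box = ker d ⊓ ker δ
  have hKer : ∀ x, x ∈ K → d x = 0 ∧ δ x = 0 := by
    intro x hx
    have hx' : d (δ x) + δ (d x) = 0 := by simpa [hK] using hx
    have h3 : d (δ x) = 0 := by
      refine z1 _ (hdd (δ x)) ⟨-(d x), ?_⟩
      rw [map_neg]
      exact neg_eq_of_add_eq_zero_left hx'
    have h4 : δ (d x) = 0 := by rwa [h3, zero_add] at hx'
    exact ⟨z2 _ h4 ⟨x, rfl⟩, z1 _ h3 ⟨x, rfl⟩⟩
  have hKer' : ∀ x, d x = 0 → δ x = 0 → x ∈ K := by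
    intro x h3 h4
    simp [hK, LinearMap.mem_ker, h3, h4]
  -- disjointness facts
  have memsup : ∀ (p q : Submodule ℂ V) (x : V), x ∈ p ⊔ q →
      ∃ a ∈ p, ∃ b ∈ q, x = a + b := by
    intro p q x hx
    obtain ⟨a, ha, b, hb, hab⟩ := Submodule.mem_sup.mp hx
    exact ⟨a, ha, b, hb, hab.symm⟩
  have hA : Disjoint Rd (K ⊔ Rδ) := by
    rw [disjoint_iff_inf_le]
    intro x ⟨hx1, hx2⟩
    obtain ⟨b, hb, c, hc, hbc⟩ := memsup _ _ _ hx2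
    obtain ⟨y, hy⟩ := hx1
    obtain ⟨z, hz⟩ := hc
    have hbd : d b = 0 := (hKer b hb).1
    have hbδ : δ b = 0 := (hKer b hb).2
    have hdx : d x = 0 := by rw [← hy]; exact hdd y
    have hc0 : c = 0 := by
      refine z1 _ ?_ ⟨z, hz⟩
      have : d x = d b + d c := by rw [hbc, map_add]
      rw [hdx, hbd, zero_add] at this
      exact this.symm
    have hx0 : x = b := by rw [hbc, hc0, add_zero]
    have : x = 0 := z2 x (by rw [hx0]; exact hbδ) ⟨y, hy⟩
    simp [this]
  have hB : Disjoint K (Rd ⊔ Rδ) := by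
    rw [disjoint_iff_inf_le]
    intro x ⟨hx1, hx2⟩
    obtain ⟨a, ha, c, hc, hac⟩ := memsup _ _ _ hx2
    obtain ⟨y, hy⟩ := ha
    obtain ⟨z, hz⟩ := hc
    have hxd : d x = 0 := (hKer x hx1).1
    have hxδ : δ x = 0 := (hKer x hx1).2
    have hc0 : c = 0 := by
      refine z1 _ ?_ ⟨z, hz⟩
      have : d x = d a + d c := by rw [hac, map_add]
      rw [hxd, ← hy, hdd y, zero_add] at this
      exact this.symm
    have ha0 : a = 0 := by
      refine z2 _ ?_ ⟨y, hy⟩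
      have : δ x = δ a + δ c := by rw [hac, map_add]
      rw [hxδ, hc0, map_zero, add_zero] at this
      exact this.symm
    have : x = 0 := by rw [hac, ha0, hc0, add_zero]
    simp [this]
  have hC : Disjoint Rδ (Rd ⊔ K) := by
    rw [disjoint_iff_inf_le]
    intro x ⟨hx1, hx2⟩
    obtain ⟨a, ha, b, hb, hab⟩ := memsup _ _ _ hx2
    obtain ⟨y, hy⟩ := hx1
    obtain ⟨z, hz⟩ := ha
    have hbδ : δ b = 0 := (hKer b hb).2
    have hδx : δ x = 0 := by rw [← hy]; exact hδδ y
    have ha0 : a = 0 := by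
      refine z2 _ ?_ ⟨z, hz⟩
      have : δ x = δ a + δ b := by rw [hab, map_add]
      rw [hδx, hbδ, add_zero] at this
      exact this.symm
    have hx0 : x = b := by rw [hab, ha0, zero_add]
    have : x = 0 := z1 x (by rw [hx0]; exact (hKer b hb).1) ⟨y, hy⟩
    simp [this]
  -- dimension count: (Rd ⊔ Rδ) ⊔ K = ⊤
  have hrangele : LinearMap.range (d ∘ₗ δ + δ ∘ₗ d) ≤ Rd ⊔ Rδ := by
    rintro x ⟨y, rfl⟩
    have : (d ∘ₗ δ + δ ∘ₗ d) y = d (δ y) + δ (d y) := by simp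
    rw [this]
    exact Submodule.add_mem _ (Submodule.mem_sup_left ⟨δ y, rfl⟩)
      (Submodule.mem_sup_right ⟨d y, rfl⟩)
  have hdim1 : Module.finrank ℂ (LinearMap.range (d ∘ₗ δ + δ ∘ₗ d))
      + Module.finrank ℂ K = Module.finrank ℂ V :=
    LinearMap.finrank_range_add_finrank_ker _
  have hdim2 : Module.finrank ℂ (Rd ⊔ Rδ : Submodule ℂ V) + Module.finrank ℂ K
      ≤ Module.finrank ℂ V := by
    have := Submodule.finrank_add_finrank_le_of_disjoint hB
    omega
  have hdim3 : Module.finrank ℂ (LinearMap.range (d ∘ₗ δ + δ ∘ₗ d))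
      ≤ Module.finrank ℂ (Rd ⊔ Rδ : Submodule ℂ V) :=
    Submodule.finrank_mono hrangele
  have hdim : Module.finrank ℂ (Rd ⊔ Rδ : Submodule ℂ V) + Module.finrank ℂ K
      = Module.finrank ℂ V := by omega
  have htop : (Rd ⊔ Rδ) ⊔ K = ⊤ :=
    Submodule.eq_top_of_disjoint _ _ hdim.ge hB.symm
  -- now assemble
  set f : Fin 3 → Submodule ℂ V := ![Rd, K, Rδ] with hf
  have hf0 : f 0 = Rd := rfl
  have hf1 : f 1 = K := rfl
  have hf2 : f 2 = Rδ := rfl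
  apply DirectSum.isInternal_submodule_of_iSupIndep_of_iSup_eq_top
  · rw [iSupIndep_def]
    intro i
    have hle : ∀ (i : Fin 3) (p : Submodule ℂ V),
        (∀ j, j ≠ i → f j ≤ p) → (⨆ (j) (_ : j ≠ i), f j) ≤ p := by
      intro i p h
      exact iSup₂_le h
    fin_cases i
    · refine hA.mono_right (hle _ _ ?_)
      intro j hj
      fin_cases j
      · exact absurd rfl hj
      · exact le_sup_left
      · exact le_sup_right
    · refine hB.mono_right (hle _ _ ?_)
      intro j hj
      fin_cases j
      · exact le_sup_left
      · exact absurd rfl hj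
      · exact le_sup_right
    · refine hC.mono_right (hle _ _ ?_)
      intro j hj
      fin_cases j
      · exact le_sup_left
      · exact le_sup_right
      · exact absurd rfl hj
  · apply le_antisymm le_top
    rw [← htop]
    apply sup_le (sup_le _ _) _
    · exact le_iSup f 0
    · exact le_iSup f 2
    · exact le_iSup f 1
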